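/- For the Dynkin quiver of type A_2 with orientation 1 -> 2, every finite-dimensional representation of dimension vector (m,n) decomposes as a direct sum of m_{[1,1]} copies of the indecomposable [1,1], m_{[2,2]} copies of [2,2], and m_{[1,2]} copies of [1,2] with m_{[1,1]} + m_{[1,2]} = m and m_{[2,2]} + m_{[1,2]} = n; and the Rimányi–Weigandt-type identity holds: 1/((q)_m (q)_n) = \sum q^{m_{[1,1]} m_{[2,2]}} / ((q)_{m_{[1,1]}} (q)_{m_{[2,2]}} (q)_{m_{[1,2]}}), where the sum is over all nonnegative m_{[1,1]}, m_{[2,2]}, m_{[1,2]} with m_{[1,1]} + m_{[1,2]} = m and m_{[2,2]} + m_{[1,2]} = n. -/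

import Mathlib

open PowerSeries

/-- The q-Pochhammer symbol `(q;q)_k` as a formal power series in `q`. -/
noncomputable def qPoch (k : ℕ) : PowerSeries ℚ :=
  ∏ i ∈ Finset.range k, (1 - (X : PowerSeries ℚ) ^ (i + 1))

/-- The normal form of a representation of the `A₂` quiver `1 → 2` which is the direct sum of
`m₁₂` copies of the indecomposable `[1,2] = (ℂ → ℂ, id)` together with copies of
`[1,1] = (ℂ → 0)` and `[2,2] = (0 → ℂ)`: the matrix with `m₁₂` ones on the diagonal. -/
noncomputable def normalForm (m n m12 : ℕ) : Matrix (Fin n) (Fin m) ℂ :=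
  Matrix.of fun i j => if (i : ℕ) = (j : ℕ) ∧ (i : ℕ) < m12 then 1 else 0

open Module Submodule LinearMap in
lemma part1 (m n : ℕ) (M : Matrix (Fin n) (Fin m) ℂ) :
    ∃ m11 m22 m12 : ℕ, m11 + m12 = m ∧ m22 + m12 = n ∧
      ∃ (P : Matrix (Fin n) (Fin n) ℂ) (Q : Matrix (Fin m) (Fin m) ℂ),
        IsUnit P ∧ IsUnit Q ∧ P * M * Q = normalForm m n m12 := by
  set f : (Fin m → ℂ) →ₗ[ℂ] (Fin n → ℂ) := M.mulVecLin with hf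
  obtain ⟨W, hW⟩ := Submodule.exists_isCompl (LinearMap.ker f)
  obtain ⟨U, hU⟩ := Submodule.exists_isCompl (LinearMap.range f)
  set r := finrank ℂ (LinearMap.range f) with hr
  set k := finrank ℂ (LinearMap.ker f) with hk
  set u := finrank ℂ U with hu
  have hm : r + k = m := by
    have := LinearMap.finrank_range_add_finrank_ker f
    simpa [Module.finrank_fin_fun] using this
  have hn : r + u = n := by
    have := Submodule.finrank_add_eq_of_isCompl hU
    simpa [Module.finrank_fin_fun] using this
  -- bases
  set bR : Basis (Fin r) ℂ (LinearMap.range f) := finBasis ℂ (LinearMap.range f) with hbR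
  set e : W ≃ₗ[ℂ] LinearMap.range f :=
    (quotientEquivOfIsCompl (LinearMap.ker f) W hW).symm.trans f.quotKerEquivRange with he
  have he' : ∀ w : W, (e w : Fin n → ℂ) = f (w : Fin m → ℂ) := fun w => by
    simp [he, LinearMap.quotKerEquivRange_apply_mk]
  set bW : Basis (Fin r) ℂ W := bR.map e.symm with hbW
  set bK : Basis (Fin k) ℂ (LinearMap.ker f) := finBasis ℂ (LinearMap.ker f) with hbK
  set bU : Basis (Fin u) ℂ U := finBasis ℂ U with hbU
  set b1 : Basis (Fin m) ℂ (Fin m → ℂ) :=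
    ((bW.prod bK).map (Submodule.prodEquivOfIsCompl W (LinearMap.ker f) hW.symm)).reindex
      (finSumFinEquiv.trans (finCongr hm)) with hb1
  set b2 : Basis (Fin n) ℂ (Fin n → ℂ) :=
    ((bR.prod bU).map (Submodule.prodEquivOfIsCompl (LinearMap.range f) U hU)).reindex
      (finSumFinEquiv.trans (finCongr hn)) with hb2
  have hb2val : ∀ (i : Fin r), b2 ⟨i, by omega⟩ = (bR i : Fin n → ℂ) := by
    intro i
    have h2 : (⟨(i : ℕ), by omega⟩ : Fin n) = (finSumFinEquiv.trans (finCongr hn)) (Sum.inl i) := by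
      ext; simp
    rw [h2, hb2, Basis.reindex_apply, Equiv.symm_apply_apply, Basis.map_apply,
      Basis.prod_apply]
    simp [Submodule.coe_prodEquivOfIsCompl']
  have hA : ∀ j : Fin m, f (b1 j) =
      if h : (j : ℕ) < r then b2 ⟨(j : ℕ), by omega⟩ else 0 := by
    intro j
    by_cases h : (j : ℕ) < r
    · rw [dif_pos h]
      have hj : j = (finSumFinEquiv.trans (finCongr hm)) (Sum.inl ⟨(j : ℕ), h⟩) := by
        ext; simp
      conv_lhs => rw [hj, hb1, Basis.reindex_apply, Equiv.symm_apply_apply, Basis.map_apply,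
        Basis.prod_apply]
      simp only [Sum.elim_inl, Function.comp_apply, Submodule.coe_prodEquivOfIsCompl',
        LinearMap.coe_inl, Submodule.coe_zero, add_zero, ZeroMemClass.coe_zero]
      rw [← he']
      rw [hbW, Basis.map_apply, e.apply_symm_apply, hb2val ⟨(j : ℕ), h⟩]
    · rw [dif_neg h]
      have hj : j = (finSumFinEquiv.trans (finCongr hm)) (Sum.inr ⟨(j : ℕ) - r, by omega⟩) := by
        ext; simp; omega
      conv_lhs => rw [hj, hb1, Basis.reindex_apply, Equiv.symm_apply_apply, Basis.map_apply,
        Basis.prod_apply]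
      simp only [Sum.elim_inr, Function.comp_apply, Submodule.coe_prodEquivOfIsCompl',
        LinearMap.coe_inr, Submodule.coe_zero, zero_add, ZeroMemClass.coe_zero]
      exact LinearMap.mem_ker.mp (bK ⟨(j : ℕ) - r, by omega⟩).2
  -- matrices
  set P : Matrix (Fin n) (Fin n) ℂ := LinearMap.toMatrix (Pi.basisFun ℂ (Fin n)) b2 LinearMap.id with hP
  set P' : Matrix (Fin n) (Fin n) ℂ := LinearMap.toMatrix b2 (Pi.basisFun ℂ (Fin n)) LinearMap.id with hP'
  set Q : Matrix (Fin m) (Fin m) ℂ := LinearMap.toMatrix b1 (Pi.basisFun ℂ (Fin m)) LinearMap.id with hQ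
  set Q' : Matrix (Fin m) (Fin m) ℂ := LinearMap.toMatrix (Pi.basisFun ℂ (Fin m)) b1 LinearMap.id with hQ'
  have hPP' : P * P' = 1 := by
    rw [hP, hP', ← LinearMap.toMatrix_comp, LinearMap.id_comp, LinearMap.toMatrix_id]
  have hQQ' : Q * Q' = 1 := by
    rw [hQ, hQ', ← LinearMap.toMatrix_comp, LinearMap.id_comp, LinearMap.toMatrix_id]
  have hM : M = LinearMap.toMatrix (Pi.basisFun ℂ (Fin m)) (Pi.basisFun ℂ (Fin n)) f := by
    have h0 : LinearMap.toMatrix (Pi.basisFun ℂ (Fin m)) (Pi.basisFun ℂ (Fin n)) =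
        LinearMap.toMatrix' := rfl
    rw [hf, h0, ← Matrix.toLin'_apply', LinearMap.toMatrix'_toLin']
  refine ⟨k, u, r, by omega, by omega, P, Q, (Matrix.isUnit_iff_isUnit_det _).mpr (Matrix.isUnit_det_of_right_inverse hPP'),
    (Matrix.isUnit_iff_isUnit_det _).mpr (Matrix.isUnit_det_of_right_inverse hQQ'), ?_⟩
  have key : P * M * Q = LinearMap.toMatrix b1 b2 f := by
    rw [hM, hP, hQ, ← LinearMap.toMatrix_comp, ← LinearMap.toMatrix_comp,
      LinearMap.id_comp, LinearMap.comp_id]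
  rw [key]
  ext i j
  rw [LinearMap.toMatrix_apply, hA j]
  by_cases h : (j : ℕ) < r
  · rw [dif_pos h, Basis.repr_self, Finsupp.single_apply, normalForm]
    simp only [Matrix.of_apply]
    by_cases hij : (⟨(j : ℕ), by omega⟩ : Fin n) = i
    · rw [if_pos hij]
      have : (i : ℕ) = (j : ℕ) := by rw [← hij]
      rw [if_pos ⟨this, by omega⟩]
    · rw [if_neg hij, if_neg]
      rintro ⟨h1, h2⟩
      exact hij (by ext; simp [h1])
  · rw [dif_neg h, normalForm]
    simp only [map_zero, Finsupp.coe_zero, Pi.zero_apply, Matrix.of_apply]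
    rw [if_neg]
    rintro ⟨h1, h2⟩
    omega

lemma qPoch_zero : qPoch 0 = 1 := Finset.prod_range_zero _

lemma qPoch_succ (k : ℕ) : qPoch (k + 1) = qPoch k * (1 - (X : PowerSeries ℚ) ^ (k + 1)) :=
  Finset.prod_range_succ _ _

lemma constantCoeff_qPoch (k : ℕ) : constantCoeff (qPoch k) = 1 := by
  rw [qPoch, map_prod]
  simp

lemma constantCoeff_qPoch_ne (k : ℕ) : constantCoeff (qPoch k) ≠ 0 := by
  rw [constantCoeff_qPoch]; norm_num

noncomputable def φL : PowerSeries ℚ →+* LaurentSeries ℚ := HahnSeries.ofPowerSeries ℤ ℚ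

lemma φL_inj : Function.Injective φL := HahnSeries.ofPowerSeries_injective

noncomputable def PL (k : ℕ) : LaurentSeries ℚ := φL (qPoch k)

noncomputable def xL : LaurentSeries ℚ := φL (X : PowerSeries ℚ)

lemma PL_ne (k : ℕ) : PL k ≠ 0 := by
  intro h
  have := φL_inj (h.trans (map_zero φL).symm)
  exact constantCoeff_qPoch_ne k (by rw [this]; simp)

lemma PL_zero : PL 0 = 1 := by rw [PL, qPoch_zero, map_one]

lemma PL_succ (k : ℕ) : PL (k + 1) = PL k * (1 - xL ^ (k + 1)) := by
  rw [PL, PL, xL, qPoch_succ, map_mul, map_sub, map_one, map_pow]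

lemma one_sub_xL_ne (k : ℕ) : (1 : LaurentSeries ℚ) - xL ^ (k + 1) ≠ 0 := by
  intro h0
  apply PL_ne (k + 1)
  rw [PL_succ, h0, mul_zero]

lemma φL_inv (ψ : PowerSeries ℚ) (h : constantCoeff ψ ≠ 0) : φL ψ⁻¹ = (φL ψ)⁻¹ := by
  have h1 : φL ψ⁻¹ * φL ψ = 1 := by
    rw [← map_mul, PowerSeries.inv_mul_cancel ψ h, map_one]
  exact eq_inv_of_mul_eq_one_left h1

/-- Gauss binomial in the Laurent series field. -/
noncomputable def CL (a j : ℕ) : LaurentSeries ℚ :=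
  if j ≤ a then PL a / (PL (a - j) * PL j) else 0

lemma CL_zero (a : ℕ) : CL a 0 = 1 := by
  rw [CL, if_pos (Nat.zero_le a), Nat.sub_zero, PL_zero, mul_one, div_self (PL_ne a)]

lemma CL_of_gt {a j : ℕ} (h : a < j) : CL a j = 0 := by simp [CL, Nat.not_le.2 h]

lemma keyL (a i : ℕ) : CL a (i + 1) * PL (i + 1) = (1 - xL ^ (a - i)) * (CL a i * PL i) := by
  rcases lt_or_ge i a with h | h
  · have ha : i + 1 ≤ a := h
    have hai : a - i = (a - i - 1) + 1 := by omega
    have hsub : PL (a - i) = PL (a - i - 1) * (1 - xL ^ (a - i)) := by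
      rw [hai, PL_succ, ← hai]
    have hne : (1 : LaurentSeries ℚ) - xL ^ (a - i) ≠ 0 := by
      rw [hai]; exact one_sub_xL_ne _
    have h1 : a - (i + 1) = a - i - 1 := by omega
    rw [CL, if_pos ha, CL, if_pos h.le, h1, hsub]
    field_simp [PL_ne]
  · have h0 : a - i = 0 := by omega
    rw [CL_of_gt (show a < i + 1 by omega), h0, pow_zero, sub_self, zero_mul, zero_mul]

lemma pascalL (a j : ℕ) : CL (a + 1) (j + 1) = CL a (j + 1) + xL ^ (a - j) * CL a j := by
  rcases lt_or_ge j a with h | h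
  · have h1 : j + 1 ≤ a + 1 := by omega
    have h2 : j + 1 ≤ a := h
    have e1 : a + 1 - (j + 1) = a - j := by omega
    have e2 : a - (j + 1) = a - j - 1 := by omega
    have haj : a - j = (a - j - 1) + 1 := by omega
    have hPa : PL (a + 1) = PL a * (1 - xL ^ (a + 1)) := PL_succ a
    have hPaj : PL (a - j) = PL (a - j - 1) * (1 - xL ^ (a - j)) := by
      rw [haj, PL_succ, ← haj]
    have hPj : PL (j + 1) = PL j * (1 - xL ^ (j + 1)) := PL_succ j
    have hne1 : (1 : LaurentSeries ℚ) - xL ^ (a - j) ≠ 0 := by rw [haj]; exact one_sub_xL_ne _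
    have hne2 : (1 : LaurentSeries ℚ) - xL ^ (j + 1) ≠ 0 := one_sub_xL_ne _
    have hx : xL ^ (a - j) * xL ^ (j + 1) = xL ^ (a + 1) := by
      rw [← pow_add]; congr 1; omega
    rw [CL, if_pos h1, CL, if_pos h2, CL, if_pos h.le, e1, e2, hPa, ← hx, hPaj, hPj]
    field_simp [PL_ne]
    ring
  · rcases eq_or_lt_of_le h with rfl | h'
    · rw [CL_of_gt (show a < a + 1 by omega), Nat.sub_self, pow_zero, one_mul, zero_add]
      simp [CL, Nat.sub_self, PL_zero, div_self (PL_ne _)]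
    · rw [CL_of_gt (show a + 1 < j + 1 by omega), CL_of_gt (show a < j + 1 by omega),
        CL_of_gt h', zero_add, mul_zero]

lemma stepL (m j n' : ℕ) (hj : j ≤ n') :
    xL ^ ((m - j) * (n' + 1 - j)) * (CL m j * CL n' j * PL j) +
      xL ^ ((m - (j + 1)) * (n' - j)) * xL ^ (n' - j) * (CL m (j + 1) * CL n' j * PL (j + 1)) =
    xL ^ ((m - j) * (n' - j)) * (CL m j * CL n' j * PL j) := by
  have hL := keyL m j
  rcases lt_or_ge j m with h | h
  · have e1 : (m - j) * (n' + 1 - j) = (m - j) * (n' - j) + (m - j) := by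
      have h5 : n' + 1 - j = (n' - j) + 1 := by omega
      rw [h5, Nat.mul_succ]
    have e2 : (m - (j + 1)) * (n' - j) + (n' - j) = (m - j) * (n' - j) := by
      have h3 : m - j = (m - j - 1) + 1 := by omega
      have h4 : m - (j + 1) = m - j - 1 := by omega
      rw [h4]
      conv_rhs => rw [h3]
      rw [Nat.succ_mul]
    have p1 : xL ^ ((m - j) * (n' + 1 - j)) = xL ^ ((m - j) * (n' - j)) * xL ^ (m - j) := by
      rw [e1, pow_add]
    have p2 : xL ^ ((m - (j + 1)) * (n' - j)) * xL ^ (n' - j) = xL ^ ((m - j) * (n' - j)) := by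
      rw [← pow_add, e2]
    linear_combination (CL m j * CL n' j * PL j) * p1 +
      (CL m (j + 1) * CL n' j * PL (j + 1)) * p2 +
      xL ^ ((m - j) * (n' - j)) * CL n' j * hL
  · have h0 : m - j = 0 := by omega
    have h1 : m - (j + 1) = 0 := by omega
    rw [CL_of_gt (show m < j + 1 by omega), h0, h1]
    simp

lemma TL : ∀ (n m : ℕ), ∑ j ∈ Finset.range (n + 1),
    xL ^ ((m - j) * (n - j)) * (CL m j * CL n j * PL j) = 1 := by
  intro n
  induction n with
  | zero => intro m; simp [CL_zero, PL_zero]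
  | succ n ih =>
    intro m
    calc ∑ j ∈ Finset.range (n + 1 + 1),
          xL ^ ((m - j) * (n + 1 - j)) * (CL m j * CL (n + 1) j * PL j)
        = ∑ i ∈ Finset.range (n + 1), xL ^ ((m - (i + 1)) * (n + 1 - (i + 1))) *
            (CL m (i + 1) * CL (n + 1) (i + 1) * PL (i + 1))
          + xL ^ ((m - 0) * (n + 1 - 0)) * (CL m 0 * CL (n + 1) 0 * PL 0) :=
          Finset.sum_range_succ' _ _
      _ = ∑ i ∈ Finset.range (n + 1),
            (xL ^ ((m - (i + 1)) * (n + 1 - (i + 1))) * (CL m (i + 1) * CL n (i + 1) * PL (i + 1))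
              + xL ^ ((m - (i + 1)) * (n - i)) * xL ^ (n - i) *
                (CL m (i + 1) * CL n i * PL (i + 1)))
          + xL ^ ((m - 0) * (n + 1 - 0)) * (CL m 0 * CL n 0 * PL 0) := by
          simp only [CL_zero]
          congr 1
          refine Finset.sum_congr rfl fun i _ => ?_
          have hn2 : n + 1 - (i + 1) = n - i := by omega
          rw [hn2, pascalL]
          ring
      _ = (∑ i ∈ Finset.range (n + 1), xL ^ ((m - (i + 1)) * (n + 1 - (i + 1))) *
              (CL m (i + 1) * CL n (i + 1) * PL (i + 1))
            + xL ^ ((m - 0) * (n + 1 - 0)) * (CL m 0 * CL n 0 * PL 0))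
          + ∑ i ∈ Finset.range (n + 1), xL ^ ((m - (i + 1)) * (n - i)) * xL ^ (n - i) *
              (CL m (i + 1) * CL n i * PL (i + 1)) := by
          rw [Finset.sum_add_distrib]; ring
      _ = ∑ j ∈ Finset.range (n + 1 + 1),
            xL ^ ((m - j) * (n + 1 - j)) * (CL m j * CL n j * PL j)
          + ∑ i ∈ Finset.range (n + 1), xL ^ ((m - (i + 1)) * (n - i)) * xL ^ (n - i) *
              (CL m (i + 1) * CL n i * PL (i + 1)) := by
          congr 1
          exact (Finset.sum_range_succ' (fun j => xL ^ ((m - j) * (n + 1 - j)) *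
            (CL m j * CL n j * PL j)) (n + 1)).symm
      _ = ∑ j ∈ Finset.range (n + 1),
            xL ^ ((m - j) * (n + 1 - j)) * (CL m j * CL n j * PL j)
          + ∑ i ∈ Finset.range (n + 1), xL ^ ((m - (i + 1)) * (n - i)) * xL ^ (n - i) *
              (CL m (i + 1) * CL n i * PL (i + 1)) := by
          rw [Finset.sum_range_succ, CL_of_gt (show n < n + 1 by omega)]
          simp
      _ = ∑ j ∈ Finset.range (n + 1), xL ^ ((m - j) * (n - j)) * (CL m j * CL n j * PL j) := by
          rw [← Finset.sum_add_distrib]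
          refine Finset.sum_congr rfl fun j hj => ?_
          exact stepL m j n (Nat.lt_succ_iff.mp (Finset.mem_range.mp hj))
      _ = 1 := ih m

lemma finalL (m n : ℕ) : (PL m * PL n)⁻¹ =
    ∑ j ∈ Finset.range (min m n + 1),
      xL ^ ((m - j) * (n - j)) * (PL (m - j) * PL (n - j) * PL j)⁻¹ := by
  have h1 : ∀ j ∈ Finset.range (min m n + 1),
      xL ^ ((m - j) * (n - j)) * (PL (m - j) * PL (n - j) * PL j)⁻¹ =
      (PL m * PL n)⁻¹ * (xL ^ ((m - j) * (n - j)) * (CL m j * CL n j * PL j)) := by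
    intro j hj
    have hjm : j ≤ m := by have := Finset.mem_range.mp hj; omega
    have hjn : j ≤ n := by have := Finset.mem_range.mp hj; omega
    rw [CL, if_pos hjm, CL, if_pos hjn]
    field_simp [PL_ne]
  rw [Finset.sum_congr rfl h1, ← Finset.mul_sum]
  have h2 : ∑ j ∈ Finset.range (min m n + 1),
      xL ^ ((m - j) * (n - j)) * (CL m j * CL n j * PL j) =
      ∑ j ∈ Finset.range (n + 1), xL ^ ((m - j) * (n - j)) * (CL m j * CL n j * PL j) := by
    apply Finset.sum_subset
    · exact Finset.range_subset_range.mpr (by omega)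
    · intro j hj hj'
      have h3 : m < j := by
        simp only [Finset.mem_range, not_lt] at hj hj'
        omega
      rw [CL_of_gt h3]
      ring
  rw [h2, TL n m, mul_one]

lemma part2 (m n : ℕ) :
    (qPoch m * qPoch n)⁻¹ =
      ∑ j ∈ Finset.range (min m n + 1),
        (X : PowerSeries ℚ) ^ ((m - j) * (n - j)) *
          (qPoch (m - j) * qPoch (n - j) * qPoch j)⁻¹ := by
  apply φL_inj
  rw [map_sum]
  have hL : φL ((qPoch m * qPoch n)⁻¹) = (PL m * PL n)⁻¹ := by
    rw [φL_inv _ (by rw [map_mul, constantCoeff_qPoch, constantCoeff_qPoch]; norm_num), map_mul]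
    rfl
  have hR : ∀ j ∈ Finset.range (min m n + 1),
      φL ((X : PowerSeries ℚ) ^ ((m - j) * (n - j)) *
        (qPoch (m - j) * qPoch (n - j) * qPoch j)⁻¹)
      = xL ^ ((m - j) * (n - j)) * (PL (m - j) * PL (n - j) * PL j)⁻¹ := by
    intro j _
    rw [map_mul, map_pow, φL_inv _ (by rw [map_mul, map_mul, constantCoeff_qPoch,
      constantCoeff_qPoch, constantCoeff_qPoch]; norm_num), map_mul, map_mul]
    rfl
  rw [hL, Finset.sum_congr rfl hR, finalL]

/-- (1) Every finite-dimensional representation of the `A₂` quiver `1 → 2` with dimension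
vector `(m, n)` (i.e. a linear map `ℂᵐ → ℂⁿ`, given by a matrix) decomposes as a direct sum
of `m_{[1,1]}` copies of `[1,1]`, `m_{[2,2]}` copies of `[2,2]` and `m_{[1,2]}` copies of
`[1,2]`, with `m_{[1,1]} + m_{[1,2]} = m` and `m_{[2,2]} + m_{[1,2]} = n` — equivalently the
matrix can be brought into the normal form with `m_{[1,2]}` diagonal ones by base change on
both sides; and (2) the Rimányi–Weigandt-type identity
`1/((q)_m (q)_n) = ∑ q^{m_{[1,1]} m_{[2,2]}} / ((q)_{m_{[1,1]}} (q)_{m_{[2,2]}} (q)_{m_{[1,2]}})`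
holds, the sum being over all nonnegative `m_{[1,1]}, m_{[2,2]}, m_{[1,2]}` with
`m_{[1,1]} + m_{[1,2]} = m` and `m_{[2,2]} + m_{[1,2]} = n`. -/
theorem a2_quiver_decomposition_and_identity :
    (∀ (m n : ℕ) (M : Matrix (Fin n) (Fin m) ℂ),
      ∃ m11 m22 m12 : ℕ, m11 + m12 = m ∧ m22 + m12 = n ∧
        ∃ (P : Matrix (Fin n) (Fin n) ℂ) (Q : Matrix (Fin m) (Fin m) ℂ),
          IsUnit P ∧ IsUnit Q ∧ P * M * Q = normalForm m n m12) ∧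
    (∀ m n : ℕ,
      (qPoch m * qPoch n)⁻¹ =
        ∑ j ∈ Finset.range (min m n + 1),
          (X : PowerSeries ℚ) ^ ((m - j) * (n - j)) *
            (qPoch (m - j) * qPoch (n - j) * qPoch j)⁻¹) := by
  exact ⟨part1, part2⟩
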